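/- Let G be a simple graph on a finite vertex set V, let ω be a real number, and let O, A : V → ℝ. Let D = {v ∈ V | O(v) > 2ω/3}. Assume: (i) D is an independent set of G; (ii) every vertex v ∉ D has at most 3 neighbors in D; (iii) every vertex v ∉ D satisfies A(v) ≥ 3·O(v)/7. Define B : V → ℝ by B(v) = 3·O(v)/7 if v ∉ D, and B(v) = A(v) + (∑_{u ∈ N(v)} (A(u) − 3·O(u)/7))/3 if v ∈ D, where N(v) is the neighborhood of v in G. Then ∑_{v ∈ V} B(v) ≤ ∑_{v ∈ V} A(v). -/

import Mathlib

open scoped Classical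
open Finset

/-- Lemma 2: the amortized counts B(v) sum to at most the total online
profit ∑ A(v). -/
theorem stmt_3 {V : Type*} [Fintype V] [DecidableEq V] (G : SimpleGraph V)
    (ω : ℝ) (O A B : V → ℝ)
    (hInd : ∀ u v : V, O u > 2 * ω / 3 → O v > 2 * ω / 3 → ¬ G.Adj u v)
    (hDeg : ∀ v : V, ¬ (O v > 2 * ω / 3) →
      ((G.neighborFinset v).filter (fun u => O u > 2 * ω / 3)).card ≤ 3)
    (hSafe : ∀ v : V, ¬ (O v > 2 * ω / 3) → A v ≥ 3 * O v / 7)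
    (hBsafe : ∀ v : V, ¬ (O v > 2 * ω / 3) → B v = 3 * O v / 7)
    (hBdang : ∀ v : V, O v > 2 * ω / 3 →
      B v = A v + (∑ u ∈ G.neighborFinset v, (A u - 3 * O u / 7)) / 3) :
    ∑ v, B v ≤ ∑ v, A v := by
  classical
  set Dp : V → Prop := fun v => O v > 2 * ω / 3 with hDp
  set D : Finset V := univ.filter Dp with hDdef
  set s : V → ℝ := fun u => A u - 3 * O u / 7 with hs
  have hsplitB := Finset.sum_filter_add_sum_filter_not univ Dp B
  have hsplitA := Finset.sum_filter_add_sum_filter_not univ Dp A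
  -- safe part of B
  have hsafe_sum : ∑ v ∈ univ.filter (fun v => ¬ Dp v), B v
      = ∑ v ∈ univ.filter (fun v => ¬ Dp v), (A v - s v) := by
    apply Finset.sum_congr rfl
    intro v hv
    simp only [Finset.mem_filter] at hv
    rw [hBsafe v hv.2]
    simp [hs]
  -- dangerous part of B
  have hdang_sum : ∑ v ∈ D, B v
      = ∑ v ∈ D, A v + (∑ v ∈ D, ∑ u ∈ G.neighborFinset v, s u) / 3 := by
    have : ∑ v ∈ D, B v
        = ∑ v ∈ D, (A v + (∑ u ∈ G.neighborFinset v, s u) / 3) := by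
      apply Finset.sum_congr rfl
      intro v hv
      simp only [hDdef, Finset.mem_filter] at hv
      exact hBdang v hv.2
    rw [this, Finset.sum_add_distrib, ← Finset.sum_div]
  -- swap the double sum
  have hswap : ∑ v ∈ D, ∑ u ∈ G.neighborFinset v, s u
      = ∑ u : V, ((D.filter (fun v => G.Adj v u)).card : ℝ) * s u := by
    have h1 : ∀ v : V, ∑ u ∈ G.neighborFinset v, s u
        = ∑ u : V, if G.Adj v u then s u else 0 := by
      intro v
      rw [SimpleGraph.neighborFinset_eq_filter, Finset.sum_filter]
    simp_rw [h1]
    rw [Finset.sum_comm]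
    apply Finset.sum_congr rfl
    intro u _
    rw [← Finset.sum_filter, Finset.sum_const, nsmul_eq_mul]
  -- card is zero on dangerous vertices
  have hzero : ∀ u ∈ D, (D.filter (fun v => G.Adj v u)).card = 0 := by
    intro u hu
    simp only [hDdef, Finset.mem_filter] at hu
    rw [Finset.card_eq_zero, Finset.filter_eq_empty_iff]
    intro v hv
    simp only [hDdef, Finset.mem_filter] at hv
    exact hInd v u hv.2 hu.2
  -- card is at most 3 on safe vertices
  have hcard3 : ∀ u : V, ¬ Dp u → ((D.filter (fun v => G.Adj v u)).card : ℝ) ≤ 3 := by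
    intro u hu
    have heq : D.filter (fun v => G.Adj v u)
        = (G.neighborFinset u).filter (fun v => Dp v) := by
      ext v
      simp only [hDdef, Finset.mem_filter, Finset.mem_univ, true_and,
        SimpleGraph.mem_neighborFinset]
      constructor
      · rintro ⟨h1, h2⟩; exact ⟨h2.symm, h1⟩
      · rintro ⟨h1, h2⟩; exact ⟨h2, h1.symm⟩
    rw [heq]
    exact_mod_cast hDeg u hu
  -- bound the double sum
  have hbound : ∑ u : V, ((D.filter (fun v => G.Adj v u)).card : ℝ) * s u
      ≤ ∑ u ∈ univ.filter (fun u => ¬ Dp u), 3 * s u := by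
    rw [← Finset.sum_filter_add_sum_filter_not univ Dp
      (fun u => ((D.filter (fun v => G.Adj v u)).card : ℝ) * s u)]
    have h0 : ∑ u ∈ univ.filter Dp,
        ((D.filter (fun v => G.Adj v u)).card : ℝ) * s u = 0 := by
      apply Finset.sum_eq_zero
      intro u hu
      rw [hzero u (by rwa [hDdef])]
      simp
    rw [h0, zero_add]
    apply Finset.sum_le_sum
    intro u hu
    simp only [Finset.mem_filter] at hu
    have hs0 : 0 ≤ s u := by
      have := hSafe u hu.2
      simp only [hs]
      linarith
    exact mul_le_mul_of_nonneg_right (hcard3 u hu.2) hs0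
  -- the final accounting
  have hsS : ∑ u ∈ univ.filter (fun u => ¬ Dp u), 3 * s u
      = 3 * ∑ u ∈ univ.filter (fun u => ¬ Dp u), s u := by
    rw [Finset.mul_sum]
  have hAs : ∑ v ∈ univ.filter (fun v => ¬ Dp v), (A v - s v)
      = ∑ v ∈ univ.filter (fun v => ¬ Dp v), A v
        - ∑ v ∈ univ.filter (fun v => ¬ Dp v), s v := by
    rw [Finset.sum_sub_distrib]
  have key : ∑ v ∈ D, ∑ u ∈ G.neighborFinset v, s u
      ≤ 3 * ∑ u ∈ univ.filter (fun u => ¬ Dp u), s u := by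
    rw [hswap, ← hsS]; exact hbound
  have hDfil : ∑ v ∈ D, B v = ∑ v ∈ univ.filter Dp, B v := by rw [hDdef]
  have hDfilA : ∑ v ∈ D, A v = ∑ v ∈ univ.filter Dp, A v := by rw [hDdef]
  linarith [hsplitB, hsplitA, hdang_sum, hsafe_sum, key, hAs, hDfil, hDfilA]
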